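/- Let A_1,...,A_k be m-by-n real matrices and b_1,...,b_k vectors in R^m. Suppose x0 in R^n satisfies b_i = A_i x0 for all i in a subset S0 of {1,...,k} with |S0| = s and s > k/2, and suppose that for every subset Sc of {1,...,k} with |Sc| = 2s - k, the (2s-k)m-by-n matrix obtained by vertically stacking the blocks {A_i : i in Sc} has rank n. Then x0 is the unique vector satisfying s of the subsystems: for any x1 in R^n and any subset S1 of {1,...,k} with |S1| = s such that b_i = A_i x1 for all i in S1, it holds that x1 = x0. -/

import Mathlib

/-- Euclidean norm of a vector in `ℝ^m`. -/
noncomputable def euclNorm {m : ℕ} (v : Fin m → ℝ) : ℝ :=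
  Real.sqrt (∑ j, v j ^ 2)

theorem unique_P0_minimizer {k m n s : ℕ}
    (A : Fin k → Matrix (Fin m) (Fin n) ℝ) (b : Fin k → Fin m → ℝ)
    (x0 : Fin n → ℝ) (S0 : Finset (Fin k))
    (hcard : S0.card = s) (hs : k < 2 * s)
    (hcons : ∀ i ∈ S0, b i = (A i).mulVec x0)
    (hrank : ∀ Sc : Finset (Fin k), Sc.card = 2 * s - k →
      (Matrix.of fun (p : ↥Sc × Fin m) (j : Fin n) => A p.1 p.2 j).rank = n) :
    ∀ (x1 : Fin n → ℝ) (S1 : Finset (Fin k)), S1.card = s →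
      (∀ i ∈ S1, b i = (A i).mulVec x1) → x1 = x0 := by
  intro x1 S1 hcard1 hcons1
  -- intersection has at least 2s - k elements
  have hunion : (S0 ∪ S1).card ≤ k := by
    simpa using (Finset.card_le_univ (S0 ∪ S1))
  have hint : 2 * s - k ≤ (S0 ∩ S1).card := by
    have := Finset.card_union_add_card_inter S0 S1
    omega
  obtain ⟨Sc, hSc, hSccard⟩ := Finset.exists_subset_card_eq hint
  -- the stacked matrix over Sc
  set M : Matrix (↥Sc × Fin m) (Fin n) ℝ :=
    Matrix.of fun (p : ↥Sc × Fin m) (j : Fin n) => A p.1 p.2 j with hM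
  have hMrank : M.rank = n := hrank Sc hSccard
  -- need Fintype instance stuff: M : Matrix (↥Sc × Fin m) ... , convert to Fin p
  have hinj : Function.Injective M.mulVec := by
    intro x y hxy
    rw [← Matrix.mulVecLin_apply, ← Matrix.mulVecLin_apply] at hxy
    have hrn := M.mulVecLin.finrank_range_add_finrank_ker
    rw [Matrix.rank] at hMrank
    simp only [Module.finrank_fintype_fun_eq_card, Fintype.card_fin] at hrn
    rw [hMrank] at hrn
    have hker : Module.finrank ℝ (LinearMap.ker M.mulVecLin) = 0 := by omega
    have hbot : LinearMap.ker M.mulVecLin = ⊥ := Submodule.finrank_eq_zero.mp hker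
    exact LinearMap.ker_eq_bot.mp hbot hxy
  have heq : M.mulVec x1 = M.mulVec x0 := by
    funext p
    obtain ⟨⟨i, hi⟩, r⟩ := p
    have hi0 : i ∈ S0 := (Finset.mem_inter.mp (hSc hi)).1
    have hi1 : i ∈ S1 := (Finset.mem_inter.mp (hSc hi)).2
    have h1 : (A i).mulVec x1 = (A i).mulVec x0 := by
      rw [← hcons1 i hi1, hcons i hi0]
    simp only [Matrix.mulVec, dotProduct, hM, Matrix.of_apply]
    exact congrFun h1 r
  exact hinj heq
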